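/- arXiv:2310.08791 — 3 statements merged into one kernel-verified Lean document; each statement's English description precedes it below -/
import Mathlib

section
/- Let (a_l) be a sequence of reals in [−1,1] indexed by primes l, let n ≥ 1, and let C > 0. Suppose that for all x with 2^n ≤ x ≤ 2^{n+1}, both |#{primes l < x : a_l = +1} − (1/2)#{primes l < x}| ≤ C and |#{primes l < x : a_l = −1} − (1/2)#{primes l < x}| ≤ C. Then log(∏_{2^n ≤ l < 2^{n+1}, l prime} (1 + a_l/l)) = O(C·2^{−n}), with an absolute implied constant. -/
open Finset

lemma abel_id (D g : ℕ → ℝ) {N M : ℕ} (h : N + 1 ≤ M) :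
    ∑ x ∈ Finset.Ico N M, (D (x+1) - D x) * g x
      = D M * g (M-1) - D N * g N + ∑ x ∈ Finset.Ico (N+1) M, D x * (g (x-1) - g x) := by
  induction M, h using Nat.le_induction with
  | base => simp [Nat.Ico_succ_singleton]; ring
  | succ M hM ih =>
      rw [Finset.sum_Ico_succ_top (le_trans (Nat.le_succ N) hM),
        Finset.sum_Ico_succ_top hM, ih]
      simp only [Nat.add_sub_cancel]
      ring

lemma telesc (g : ℕ → ℝ) {m M : ℕ} (h : m ≤ M) :
    ∑ x ∈ Finset.Ico m M, (g x - g (x+1)) = g m - g M := by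
  induction M, h using Nat.le_induction with
  | base => simp
  | succ M hM ih => rw [Finset.sum_Ico_succ_top hM, ih]; ring

lemma log_est {t : ℝ} (ht : |t| ≤ 1/2) : |Real.log (1+t) - t| ≤ 2*t^2 := by
  obtain ⟨h1, h2⟩ := abs_le.mp ht
  have hpos : (0:ℝ) < 1 + t := by linarith
  have hub := Real.log_le_sub_one_of_pos hpos
  have hlb := Real.one_sub_inv_le_log_of_pos hpos
  have hkey : 1 - (1+t)⁻¹ = t/(1+t) := by field_simp; ring
  have h3 : t - 2*t^2 ≤ t/(1+t) := by
    rw [le_div_iff₀ hpos]; nlinarith [sq_nonneg t]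
  rw [abs_le]
  constructor <;> nlinarith [sq_nonneg t]

/-- Dyadic cancellation lemma: if among the primes below every `x ∈ [2^n, 2^(n+1)]` the values
`a l = 1` and `a l = -1` each occur half the time up to discrepancy `C`, then
`log ∏_{2^n ≤ l < 2^(n+1), l prime} (1 + a l / l) = O(C · 2^(-n))` with an absolute constant. -/
theorem stmt3 :
    ∃ A > (0:ℝ), ∀ (a : ℕ → ℝ) (n : ℕ) (C : ℝ), 1 ≤ n → 0 < C →
    (∀ l, -1 ≤ a l ∧ a l ≤ 1) →
    (∀ x : ℕ, 2^n ≤ x → x ≤ 2^(n+1) →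
      |(((Finset.range x).filter (fun l => l.Prime ∧ a l = 1)).card : ℝ) -
        (((Finset.range x).filter Nat.Prime).card : ℝ) / 2| ≤ C ∧
      |(((Finset.range x).filter (fun l => l.Prime ∧ a l = -1)).card : ℝ) -
        (((Finset.range x).filter Nat.Prime).card : ℝ) / 2| ≤ C) →
    |Real.log (∏ l ∈ (Finset.Ico (2^n) (2^(n+1))).filter Nat.Prime, (1 + a l / l))|
      ≤ A * C * 2^(-(n:ℝ)) := by
  refine ⟨16, by norm_num, ?_⟩
  intro a n C hn hC ha hx
  classical
  set N : ℕ := 2^n with hNdef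
  set M : ℕ := 2^(n+1) with hMdef
  have hMN : M = 2 * N := by rw [hMdef, hNdef, pow_succ]; ring
  have hN2 : 2 ≤ N := by
    calc 2 = 2^1 := rfl
    _ ≤ 2^n := Nat.pow_le_pow_right (by norm_num) hn
  have hNR : (0:ℝ) < (N:ℝ) := by positivity
  have hNM1 : N + 1 ≤ M := by omega
  -- rewrite the rpow
  have hrpow : (2:ℝ)^(-(n:ℝ)) = ((N:ℝ))⁻¹ := by
    rw [Real.rpow_neg (by norm_num), Real.rpow_natCast]
    rw [hNdef]; push_cast; ring
  rw [hrpow]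
  -- the sign sequence and its summatory function
  set e : ℕ → ℝ := fun l =>
    (if l.Prime ∧ a l = 1 then (1:ℝ) else 0) - (if l.Prime ∧ a l = -1 then (1:ℝ) else 0)
    with hedef
  set D : ℕ → ℝ := fun x =>
    ((((Finset.range x).filter (fun l => l.Prime ∧ a l = 1)).card : ℝ)
      - (((Finset.range x).filter (fun l => l.Prime ∧ a l = -1)).card : ℝ)) with hDdef
  have hDe : ∀ x, D (x+1) - D x = e x := by
    intro x
    have hnm : ∀ p : ℕ → Prop, ∀ inst : DecidablePred p,
        x ∉ (Finset.range x).filter p := by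
      intro p inst hmem
      exact absurd (Finset.mem_filter.mp hmem).1 (by simp)
    simp only [hDdef, hedef, Finset.range_add_one, Finset.filter_insert]
    by_cases h1 : x.Prime ∧ a x = 1 <;> by_cases h2 : x.Prime ∧ a x = -1
    · exfalso; have := h1.2; have := h2.2; linarith
    · norm_num [h1, h2, Finset.card_insert_of_notMem (hnm _ _)]
    · norm_num [h1, h2, Finset.card_insert_of_notMem (hnm _ _)]
    · simp [h1, h2]
  have hDb : ∀ x, N ≤ x → x ≤ M → |D x| ≤ 2*C := by
    intro x h1 h2
    obtain ⟨hp, hm⟩ := hx x h1 h2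
    have h3 : D x = ((((Finset.range x).filter (fun l => l.Prime ∧ a l = 1)).card : ℝ) -
        (((Finset.range x).filter Nat.Prime).card : ℝ) / 2) -
        ((((Finset.range x).filter (fun l => l.Prime ∧ a l = -1)).card : ℝ) -
        (((Finset.range x).filter Nat.Prime).card : ℝ) / 2) := by
      simp only [hDdef]; ring
    rw [h3]
    calc |_ - _| ≤ |_| + |_| := abs_sub _ _
    _ ≤ 2 * C := by linarith
  -- the function 1/x
  set g : ℕ → ℝ := fun y => ((y:ℝ))⁻¹ with hgdef
  have hgN : g N = ((N:ℝ))⁻¹ := rfl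
  have hg_nonneg : ∀ y, 0 ≤ g y := fun y => by positivity
  have hgM1 : g (M-1) ≤ g N := by
    simp only [hgdef]
    apply inv_anti₀ hNR
    exact_mod_cast Nat.le_sub_one_of_lt (by omega)
  have htel : ∑ x ∈ Finset.Ico (N+1) M, (g (x-1) - g x) = g N - g (M-1) := by
    have h1 : ∀ x ∈ Finset.Ico (N+1) M,
        g (x-1) - g x = (fun y => g (y-1)) x - (fun y => g (y-1)) (x+1) := by
      intro x _; simp
    rw [Finset.sum_congr rfl h1, telesc _ hNM1]
    simp
  have habel : |∑ x ∈ Finset.Ico N M, e x * (x:ℝ)⁻¹| ≤ 4 * C / N := by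
    have h1 : ∑ x ∈ Finset.Ico N M, e x * (x:ℝ)⁻¹
        = ∑ x ∈ Finset.Ico N M, (D (x+1) - D x) * g x :=
      Finset.sum_congr rfl fun x _ => by rw [hDe x]
    rw [h1, abel_id D g hNM1]
    have hDM := hDb M (by omega) le_rfl
    have hDN := hDb N le_rfl (by omega)
    have hS : |∑ x ∈ Finset.Ico (N+1) M, D x * (g (x-1) - g x)|
        ≤ 2*C * (g N - g (M-1)) := by
      calc |∑ x ∈ Finset.Ico (N+1) M, D x * (g (x-1) - g x)|
          ≤ ∑ x ∈ Finset.Ico (N+1) M, |D x * (g (x-1) - g x)| :=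
            Finset.abs_sum_le_sum_abs _ _
        _ ≤ ∑ x ∈ Finset.Ico (N+1) M, 2*C * (g (x-1) - g x) := by
            apply Finset.sum_le_sum
            intro x hxm
            rw [Finset.mem_Ico] at hxm
            have hd : 0 ≤ g (x-1) - g x := by
              have hx1 : (0:ℝ) < ((x-1:ℕ):ℝ) := by
                have : 1 ≤ x - 1 := by omega
                exact_mod_cast Nat.lt_of_lt_of_le Nat.zero_lt_one this
              have : ((x-1:ℕ):ℝ) ≤ (x:ℝ) := by exact_mod_cast Nat.sub_le x 1
              simp only [hgdef, sub_nonneg]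
              exact inv_anti₀ hx1 this
            rw [abs_mul, abs_of_nonneg hd]
            apply mul_le_mul_of_nonneg_right _ hd
            exact hDb x (by omega) (by omega)
        _ = 2*C * (g N - g (M-1)) := by rw [← Finset.mul_sum, htel]
    have h2 : |D M * g (M-1) - D N * g N| ≤ 2*C * g (M-1) + 2*C * g N := by
      calc |D M * g (M-1) - D N * g N| ≤ |D M * g (M-1)| + |D N * g N| := abs_sub _ _
        _ = |D M| * g (M-1) + |D N| * g N := by
            rw [abs_mul, abs_mul, abs_of_nonneg (hg_nonneg _), abs_of_nonneg (hg_nonneg _)]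
        _ ≤ 2*C * g (M-1) + 2*C * g N := by
            have := hg_nonneg (M-1); have := hg_nonneg N
            apply add_le_add <;> apply mul_le_mul_of_nonneg_right <;> assumption
    calc |D M * g (M-1) - D N * g N + ∑ x ∈ Finset.Ico (N+1) M, D x * (g (x-1) - g x)|
        ≤ |D M * g (M-1) - D N * g N| + |∑ x ∈ Finset.Ico (N+1) M, D x * (g (x-1) - g x)| :=
          abs_add_le _ _
      _ ≤ 2*C * g (M-1) + 2*C * g N + 2*C * (g N - g (M-1)) := by linarith
      _ = 4 * C * g N := by ring
      _ = 4 * C / N := by rw [hgN]; ring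
  -- C is at least 1/4, via Bertrand
  have hC4 : 1/4 ≤ C := by
    obtain ⟨p, pp, hp1, hp2⟩ := Nat.exists_prime_lt_and_le_two_mul N (by omega)
    have hpM : p < M := by
      rcases lt_or_eq_of_le (show p ≤ M by omega) with h | h
      · exact h
      · exfalso
        have : ¬ Nat.Prime M := by
          rw [hMdef, pow_succ]
          exact Nat.not_prime_mul (Nat.one_lt_two_pow_iff.mpr (by omega)).ne' (by norm_num)
        exact this (h ▸ pp)
    have hπ : ((Finset.range (p+1)).filter Nat.Prime).card
        = ((Finset.range p).filter Nat.Prime).card + 1 := by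
      rw [Finset.range_add_one, Finset.filter_insert, if_pos pp,
        Finset.card_insert_of_notMem (by simp)]
    obtain ⟨h1, -⟩ := hx p (by omega) (by omega)
    obtain ⟨h2, -⟩ := hx (p+1) (by omega) (by omega)
    rw [hπ] at h2
    by_cases hap : a p = 1
    · have hcp : ((Finset.range (p+1)).filter (fun l => l.Prime ∧ a l = 1)).card
          = ((Finset.range p).filter (fun l => l.Prime ∧ a l = 1)).card + 1 := by
        rw [Finset.range_add_one, Finset.filter_insert, if_pos ⟨pp, hap⟩,
          Finset.card_insert_of_notMem (by simp)]
      rw [hcp] at h2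
      push_cast at h1 h2
      rw [abs_le] at h1 h2
      obtain ⟨h1a, h1b⟩ := h1; obtain ⟨h2a, h2b⟩ := h2
      linarith
    · have hcp : ((Finset.range (p+1)).filter (fun l => l.Prime ∧ a l = 1)).card
          = ((Finset.range p).filter (fun l => l.Prime ∧ a l = 1)).card := by
        rw [Finset.range_add_one, Finset.filter_insert, if_neg (fun h => hap h.2)]
      rw [hcp] at h2
      push_cast at h1 h2
      rw [abs_le] at h1 h2
      obtain ⟨h1a, h1b⟩ := h1; obtain ⟨h2a, h2b⟩ := h2
      linarith
  -- the exceptional primes (a l not ±1)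
  set P : Finset ℕ := (Finset.Ico N M).filter Nat.Prime with hPdef
  set P0 : Finset ℕ := (Finset.Ico N M).filter
    (fun l => l.Prime ∧ ¬(a l = 1) ∧ ¬(a l = -1)) with hP0def
  have hP0card : (P0.card : ℝ) ≤ 2*C := by
    set O : Finset ℕ := (Finset.range M).filter
      (fun l => l.Prime ∧ ¬(a l = 1) ∧ ¬(a l = -1)) with hOdef
    have hsub : P0 ⊆ O := by
      intro l hl
      simp only [hP0def, hOdef, Finset.mem_filter, Finset.mem_Ico, Finset.mem_range] at *
      tauto
    have hmono : (P0.card : ℝ) ≤ (O.card : ℝ) := by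
      exact_mod_cast Finset.card_le_card hsub
    -- partition the primes below M by the value of a
    set s : Finset ℕ := (Finset.range M).filter Nat.Prime with hsdef
    have e1 : (s.filter (fun l => a l = 1)).card + (s.filter (fun l => ¬(a l = 1))).card
        = s.card := Finset.card_filter_add_card_filter_not _
    have e2 : ((s.filter (fun l => ¬(a l = 1))).filter (fun l => a l = -1)).card
        + ((s.filter (fun l => ¬(a l = 1))).filter (fun l => ¬(a l = -1))).card
        = (s.filter (fun l => ¬(a l = 1))).card :=
      Finset.card_filter_add_card_filter_not _
    have e3 : s.filter (fun l => a l = 1)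
        = (Finset.range M).filter (fun l => l.Prime ∧ a l = 1) := by
      rw [hsdef, Finset.filter_filter]
    have e4 : (s.filter (fun l => ¬(a l = 1))).filter (fun l => a l = -1)
        = (Finset.range M).filter (fun l => l.Prime ∧ a l = -1) := by
      rw [hsdef, Finset.filter_filter, Finset.filter_filter]
      apply Finset.filter_congr
      intro l _
      constructor
      · rintro ⟨hp, -, h⟩; exact ⟨hp, h⟩
      · rintro ⟨hp, h⟩; exact ⟨hp, by rw [h]; norm_num, h⟩
    have e5 : (s.filter (fun l => ¬(a l = 1))).filter (fun l => ¬(a l = -1)) = O := by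
      rw [hsdef, hOdef, Finset.filter_filter, Finset.filter_filter]
    obtain ⟨h1, h2⟩ := hx M (by omega) le_rfl
    rw [abs_le] at h1 h2
    have hcount : ((Finset.range M).filter (fun l => l.Prime ∧ a l = 1)).card
        + (((Finset.range M).filter (fun l => l.Prime ∧ a l = -1)).card + O.card)
        = s.card := by rw [← e3, ← e4, ← e5]; omega
    rw [hsdef] at hcount
    have hcast' : (((Finset.range M).filter (fun l => l.Prime ∧ a l = 1)).card : ℝ)
        + ((((Finset.range M).filter (fun l => l.Prime ∧ a l = -1)).card : ℝ) + (O.card:ℝ))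
        = (((Finset.range M).filter Nat.Prime).card : ℝ) := by exact_mod_cast hcount
    obtain ⟨h1a, h1b⟩ := h1; obtain ⟨h2a, h2b⟩ := h2
    linarith
  -- decomposition of the prime sum
  have hmain : ∑ l ∈ P, a l / l
      = (∑ x ∈ Finset.Ico N M, e x * (x:ℝ)⁻¹) + ∑ l ∈ P0, a l / l := by
    rw [hPdef, hP0def, Finset.sum_filter, Finset.sum_filter, ← Finset.sum_add_distrib]
    apply Finset.sum_congr rfl
    intro l _
    by_cases hp : l.Prime
    · by_cases h1 : a l = 1
      · have h2 : ¬ a l = -1 := by rw [h1]; norm_num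
        rw [if_pos hp, if_neg (by tauto)]
        simp only [hedef]
        rw [if_pos ⟨hp, h1⟩, if_neg (by tauto), h1]
        ring
      · by_cases h2 : a l = -1
        · rw [if_pos hp, if_neg (by tauto)]
          simp only [hedef]
          rw [if_neg (by tauto), if_pos ⟨hp, h2⟩, h2]
          ring
        · rw [if_pos hp, if_pos ⟨hp, h1, h2⟩]
          simp only [hedef]
          rw [if_neg (by tauto), if_neg (by tauto)]
          ring
    · rw [if_neg hp, if_neg (by tauto)]
      simp only [hedef]
      rw [if_neg (by tauto), if_neg (by tauto)]
      ring
  -- size bounds on individual terms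
  have hNhalf : ((N:ℝ))⁻¹ ≤ 1/2 := by
    have h2 : (2:ℝ) ≤ (N:ℝ) := by exact_mod_cast hN2
    have := inv_anti₀ (by norm_num : (0:ℝ) < 2) h2
    norm_num at this
    linarith
  have hsmall : ∀ l ∈ P, |a l / l| ≤ ((N:ℝ))⁻¹ := by
    intro l hl
    rw [hPdef, Finset.mem_filter, Finset.mem_Ico] at hl
    obtain ⟨⟨hlN, hlM⟩, hp⟩ := hl
    have hlR : (0:ℝ) < (l:ℝ) := by
      have : 0 < l := by omega
      exact_mod_cast this
    have h2 : (N:ℝ) ≤ (l:ℝ) := by exact_mod_cast hlN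
    have h1 : |a l| ≤ 1 := abs_le.mpr (ha l)
    rw [abs_div, abs_of_nonneg hlR.le, div_le_iff₀ hlR]
    have hinv : (N:ℝ)⁻¹ * N = 1 := inv_mul_cancel₀ hNR.ne'
    have hmul : (N:ℝ)⁻¹ * N ≤ (N:ℝ)⁻¹ * l :=
      mul_le_mul_of_nonneg_left h2 (by positivity)
    linarith
  have hpos : ∀ l ∈ P, (0:ℝ) < 1 + a l / l := by
    intro l hl
    obtain ⟨h1, h2⟩ := abs_le.mp (hsmall l hl)
    linarith
  have hcardP : (P.card : ℝ) ≤ (N:ℝ) := by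
    have h1 : P.card ≤ (Finset.Ico N M).card := Finset.card_filter_le _ _
    have h2 : (Finset.Ico N M).card = N := by rw [Nat.card_Ico]; omega
    exact_mod_cast h1.trans_eq h2
  have herr : |∑ l ∈ P, (Real.log (1 + a l / l) - a l / l)| ≤ 2 / N := by
    calc |∑ l ∈ P, (Real.log (1 + a l / l) - a l / l)|
        ≤ ∑ l ∈ P, |Real.log (1 + a l / l) - a l / l| := Finset.abs_sum_le_sum_abs _ _
      _ ≤ ∑ l ∈ P, 2 * ((N:ℝ)⁻¹)^2 := by
          apply Finset.sum_le_sum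
          intro l hl
          have h1 := hsmall l hl
          have h2 := log_est (t := a l / l) (h1.trans hNhalf)
          refine h2.trans ?_
          obtain ⟨ha1, ha2⟩ := abs_le.mp h1
          have : (a l / l)^2 ≤ ((N:ℝ)⁻¹)^2 := sq_le_sq' (by linarith) ha2
          linarith
      _ = P.card * (2 * ((N:ℝ)⁻¹)^2) := by rw [Finset.sum_const, nsmul_eq_mul]
      _ ≤ (N:ℝ) * (2 * ((N:ℝ)⁻¹)^2) := by
          apply mul_le_mul_of_nonneg_right hcardP (by positivity)
      _ = 2 / N := by field_simp
  have hsub0 : P0 ⊆ P := by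
    intro l hl
    rw [hP0def, Finset.mem_filter] at hl
    rw [hPdef, Finset.mem_filter]
    exact ⟨hl.1, hl.2.1⟩
  have hP0sum : |∑ l ∈ P0, a l / l| ≤ 2*C / N := by
    calc |∑ l ∈ P0, a l / l| ≤ ∑ l ∈ P0, |a l / l| := Finset.abs_sum_le_sum_abs _ _
      _ ≤ ∑ l ∈ P0, ((N:ℝ))⁻¹ :=
          Finset.sum_le_sum fun l hl => hsmall l (hsub0 hl)
      _ = P0.card * ((N:ℝ))⁻¹ := by rw [Finset.sum_const, nsmul_eq_mul]
      _ ≤ 2*C * ((N:ℝ))⁻¹ := mul_le_mul_of_nonneg_right hP0card (by positivity)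
      _ = 2*C / N := by ring
  -- finish
  rw [Real.log_prod (fun l hl => (hpos l hl).ne')]
  have hdecomp : ∑ l ∈ P, Real.log (1 + a l / l)
      = (∑ l ∈ P, (Real.log (1 + a l / l) - a l / l))
        + ((∑ x ∈ Finset.Ico N M, e x * (x:ℝ)⁻¹) + ∑ l ∈ P0, a l / l) := by
    rw [← hmain, Finset.sum_sub_distrib]
    ring
  rw [hdecomp]
  have hb1 : |(∑ l ∈ P, (Real.log (1 + a l / l) - a l / l))
        + ((∑ x ∈ Finset.Ico N M, e x * (x:ℝ)⁻¹) + ∑ l ∈ P0, a l / l)|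
      ≤ 2/N + (4*C/N + 2*C/N) := by
    calc |(∑ l ∈ P, (Real.log (1 + a l / l) - a l / l))
          + ((∑ x ∈ Finset.Ico N M, e x * (x:ℝ)⁻¹) + ∑ l ∈ P0, a l / l)|
        ≤ |∑ l ∈ P, (Real.log (1 + a l / l) - a l / l)|
          + |(∑ x ∈ Finset.Ico N M, e x * (x:ℝ)⁻¹) + ∑ l ∈ P0, a l / l| := abs_add_le _ _
      _ ≤ |∑ l ∈ P, (Real.log (1 + a l / l) - a l / l)|
          + (|∑ x ∈ Finset.Ico N M, e x * (x:ℝ)⁻¹| + |∑ l ∈ P0, a l / l|) := by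
          linarith [abs_add_le (∑ x ∈ Finset.Ico N M, e x * (x:ℝ)⁻¹) (∑ l ∈ P0, a l / l)]
      _ ≤ 2/N + (4*C/N + 2*C/N) := by linarith
  have heq : 2/(N:ℝ) + (4*C/N + 2*C/N) = (2 + 6*C) * ((N:ℝ))⁻¹ := by
    field_simp
    ring
  have hfin : (2 + 6*C) * ((N:ℝ))⁻¹ ≤ 16*C * ((N:ℝ))⁻¹ :=
    mul_le_mul_of_nonneg_right (by linarith) (by positivity)
  linarith
end

section
/- For every prime l, integer k ≥ 1, prime p, and integer t, |log(v_{l,k}(t²−4p)) − log(v_l(t²−4p))| = O(l^{−k}), with an absolute implied constant. -/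
/-- largest δ with l^(2δ) ∣ Δ (for l = 2, with the extra condition Δ/4^δ ≡ 0,1 mod 4) -/
noncomputable def gdelta (l : ℕ) (Δ : ℤ) : ℕ :=
  if l = 2 then sSup {δ : ℕ | (4:ℤ)^δ ∣ Δ ∧ (Δ / 4^δ % 4 = 0 ∨ Δ / 4^δ % 4 = 1)}
  else sSup {δ : ℕ | (l:ℤ)^(2*δ) ∣ Δ}

/-- Kronecker symbol (m / l) for a prime l: for odd l the Jacobi (Legendre) symbol, and for
l = 2 determined by m mod 8 (where m ≡ 0, 1 mod 4). -/
noncomputable def kron (l : ℕ) (m : ℤ) : ℤ :=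
  if l = 2 then (if m % 8 = 1 then 1 else if m % 8 = 5 then -1 else 0)
  else jacobiSym m l

/-- Gekeler's local weight v_l(Δ): with δ = gdelta l Δ, it is
(1 − l⁻²)⁻¹ (1 + l⁻¹ + c) where c = 0, −(l+1)l^(−δ−2), −2l^(−δ−1) according as the
Kronecker symbol (Δ/l^(2δ) over l) is +1, 0, −1. -/
noncomputable def gv (l : ℕ) (Δ : ℤ) : ℝ :=
  (1 - ((l:ℝ)⁻¹)^2)⁻¹ * (1 + (l:ℝ)⁻¹ +
    (if kron l (Δ / (l:ℤ)^(2 * gdelta l Δ)) = 1 then 0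
     else if kron l (Δ / (l:ℤ)^(2 * gdelta l Δ)) = 0 then
       -((l:ℝ)+1) * ((l:ℝ)⁻¹)^(gdelta l Δ + 2)
     else -2 * ((l:ℝ)⁻¹)^(gdelta l Δ + 1)))

/-- Truncated weight v_{l,k}(Δ): equals v_l(Δ) unless l^(2k) ∣ Δ, in which case it is
(1 − l⁻²)⁻¹ (1 + l⁻¹). -/
noncomputable def gvk (l k : ℕ) (Δ : ℤ) : ℝ :=
  if ((l:ℤ))^(2*k) ∣ Δ then (1 - ((l:ℝ)⁻¹)^2)⁻¹ * (1 + (l:ℝ)⁻¹) else gv l Δ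

lemma delta_ne (p : ℕ) (t : ℤ) (hp : p.Prime) : t^2 - 4*p ≠ 0 := by
  intro h
  have ht : t^2 = 4*p := by linarith
  have h2 : (2:ℤ) ∣ t := by
    have hd : (2:ℤ) ∣ t^2 := ⟨2*p, by linarith⟩
    exact Int.Prime.dvd_pow' (by norm_num) hd
  obtain ⟨s, rfl⟩ := h2
  have hs : s^2 = (p:ℤ) := by nlinarith
  have hs' : s.natAbs^2 = p := by
    have := congrArg Int.natAbs hs
    simpa [Int.natAbs_pow] using this
  have hdvd : s.natAbs ∣ p := ⟨s.natAbs, by rw [← hs']; ring⟩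
  rcases hp.eq_one_or_self_of_dvd _ hdvd with h1 | h1 <;>
    (rw [h1] at hs'; have := hp.two_le; nlinarith)

lemma gdelta_ge (l k : ℕ) (Δ : ℤ) (hl : l.Prime) (hk : 1 ≤ k) (hΔ : Δ ≠ 0)
    (hdvd : (l:ℤ)^(2*k) ∣ Δ) : k ≤ gdelta l Δ + 1 := by
  unfold gdelta
  by_cases h2 : l = 2
  · subst h2
    rw [if_pos rfl]
    have h4 : (4:ℤ)^k ∣ Δ := by
      have he : ((2:ℕ):ℤ)^(2*k) = (4:ℤ)^k := by rw [pow_mul]; norm_num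
      rwa [he] at hdvd
    obtain ⟨m, hm⟩ := h4
    have hk1 : k - 1 + 1 = k := Nat.sub_add_cancel hk
    have hΔeq : Δ = 4^(k-1) * (4 * m) := by
      have h4k : (4:ℤ)^k = 4^(k-1)*4 := by conv_lhs => rw [← hk1, pow_succ]
      rw [hm, h4k]; ring
    have hmem : k - 1 ∈ {δ : ℕ | (4:ℤ)^δ ∣ Δ ∧ (Δ / 4^δ % 4 = 0 ∨ Δ / 4^δ % 4 = 1)} := by
      constructor
      · exact ⟨4 * m, hΔeq⟩
      · left
        rw [hΔeq, Int.mul_ediv_cancel_left _ (by positivity)]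
        exact Int.mul_emod_right 4 m
    have hbdd : BddAbove {δ : ℕ | (4:ℤ)^δ ∣ Δ ∧ (Δ / 4^δ % 4 = 0 ∨ Δ / 4^δ % 4 = 1)} := by
      refine ⟨Δ.natAbs, fun δ hδ => ?_⟩
      have h1 : ((4:ℤ)^δ).natAbs ∣ Δ.natAbs := Int.natAbs_dvd_natAbs.mpr hδ.1
      have h1' : (4:ℕ)^δ ∣ Δ.natAbs := by simpa [Int.natAbs_pow] using h1
      have hle : (4:ℕ)^δ ≤ Δ.natAbs := Nat.le_of_dvd (Int.natAbs_pos.mpr hΔ) h1'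
      have h3 : δ < 4^δ := Nat.lt_pow_self (by norm_num)
      omega
    have := le_csSup hbdd hmem
    omega
  · rw [if_neg h2]
    have hmem : k ∈ {δ : ℕ | (l:ℤ)^(2*δ) ∣ Δ} := hdvd
    have hl2 : 2 ≤ l := hl.two_le
    have hbdd : BddAbove {δ : ℕ | (l:ℤ)^(2*δ) ∣ Δ} := by
      refine ⟨Δ.natAbs, fun δ hδ => ?_⟩
      have h1' : (l:ℕ)^(2*δ) ∣ Δ.natAbs := by
        have := Int.natAbs_dvd_natAbs.mpr hδ
        simpa [Int.natAbs_pow] using this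
      have hle : l^(2*δ) ≤ Δ.natAbs := Nat.le_of_dvd (Int.natAbs_pos.mpr hΔ) h1'
      have h3 : 2*δ < 2^(2*δ) := Nat.lt_pow_self (by norm_num)
      have h4 : 2^(2*δ) ≤ l^(2*δ) := Nat.pow_le_pow_left hl2 _
      omega
    have := le_csSup hbdd hmem
    omega


set_option maxHeartbeats 1000000 in
/-- |log v_{l,k}(t²−4p) − log v_l(t²−4p)| = O(l^(−k)) with an absolute implied constant. -/
theorem stmt7 :
    ∃ C > (0:ℝ), ∀ (l k p : ℕ) (t : ℤ), l.Prime → 1 ≤ k → p.Prime →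
      |Real.log (gvk l k (t^2 - 4*p)) - Real.log (gv l (t^2 - 4*p))| ≤ C / (l:ℝ)^k := by
  refine ⟨4, by norm_num, ?_⟩
  intro l k p t hl hk hp
  have hl2 : 2 ≤ l := hl.two_le
  have hlR : (2:ℝ) ≤ (l:ℝ) := by exact_mod_cast hl2
  have hlpos : (0:ℝ) < (l:ℝ) := by linarith
  by_cases hdvd : ((l:ℤ))^(2*k) ∣ (t^2 - 4*p)
  swap
  · rw [gvk, if_neg hdvd, sub_self, abs_zero]
    positivity
  · have hΔ : t^2 - 4*(p:ℤ) ≠ 0 := delta_ne p t hp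
    have hδk : k ≤ gdelta l (t^2 - 4*p) + 1 := gdelta_ge l k _ hl hk hΔ hdvd
    set δ := gdelta l (t^2 - 4*(p:ℤ)) with hδdef
    set i : ℝ := (l:ℝ)⁻¹ with hidef
    have hi0 : 0 < i := by positivity
    have hli : (l:ℝ) * i = 1 := mul_inv_cancel₀ (ne_of_gt hlpos)
    have hi2 : i ≤ 1/2 := by
      rw [hidef]
      rw [inv_le_comm₀ (by linarith) (by norm_num)]
      simpa using hlR
    have hi1 : i ≤ 1 := by linarith
    set c : ℝ := (if kron l ((t^2 - 4*(p:ℤ)) / (l:ℤ)^(2 * δ)) = 1 then 0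
     else if kron l ((t^2 - 4*(p:ℤ)) / (l:ℤ)^(2 * δ)) = 0 then
       -((l:ℝ)+1) * i^(δ + 2)
     else -2 * i^(δ + 1)) with hcdef
    have hgv : gv l (t^2 - 4*p) = (1 - i^2)⁻¹ * (1 + i + c) := by
      rw [gv]
    have hgvk : gvk l k (t^2 - 4*p) = (1 - i^2)⁻¹ * (1 + i) := by
      rw [gvk, if_pos hdvd]
    clear_value c i δ
    -- bounds on c
    have hpow1 : i^(δ+1) ≤ i^k := pow_le_pow_of_le_one hi0.le hi1 hδk
    have hpow2 : i^(δ+1) ≤ i^1 := pow_le_pow_of_le_one hi0.le hi1 (by omega)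
    have hpnn : (0:ℝ) ≤ i^(δ+1) := by positivity
    have hc0 : c ≤ 0 := by
      rw [hcdef]
      split_ifs
      · norm_num
      · nlinarith [pow_nonneg hi0.le (δ+2)]
      · nlinarith [hpnn]
    have hcge : -(2 * i^(δ+1)) ≤ c := by
      rw [hcdef]
      split_ifs
      · nlinarith
      · have he : i^(δ+2) = i * i^(δ+1) := by ring
        have : ((l:ℝ)+1) * i^(δ+2) = (1 + i) * i^(δ+1) := by
          rw [he]; nlinarith [hpnn]
        nlinarith
      · nlinarith
    have hX : (1:ℝ)/2 ≤ 1 + i + c := by nlinarith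
    have hXpos : (0:ℝ) < 1 + i + c := by linarith
    have hA : (0:ℝ) < (1 - i^2)⁻¹ := by
      have h14 : i^2 ≤ 1/4 := by nlinarith
      exact inv_pos.mpr (by linarith)
    have h1i : (0:ℝ) < 1 + i := by linarith
    rw [hgv, hgvk, Real.log_mul (ne_of_gt hA) (ne_of_gt h1i),
      Real.log_mul (ne_of_gt hA) (ne_of_gt hXpos)]
    have hdiff : Real.log ((1-i^2)⁻¹) + Real.log (1+i) - (Real.log ((1-i^2)⁻¹) + Real.log (1+i+c))
        = Real.log (1+i) - Real.log (1+i+c) := by ring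
    rw [hdiff]
    have hmono : Real.log (1+i+c) ≤ Real.log (1+i) :=
      Real.log_le_log hXpos (by linarith)
    rw [abs_of_nonneg (by linarith)]
    have hlog : Real.log (1+i) - Real.log (1+i+c) = Real.log ((1+i)/(1+i+c)) := by
      rw [Real.log_div (ne_of_gt h1i) (ne_of_gt hXpos)]
    rw [hlog]
    have hb := Real.log_le_sub_one_of_pos (show (0:ℝ) < (1+i)/(1+i+c) by positivity)
    have hfrac : (1+i)/(1+i+c) - 1 ≤ 4 * i^k := by
      rw [div_sub_one (ne_of_gt hXpos), div_le_iff₀ hXpos]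
      have hik : (0:ℝ) ≤ i^k := by positivity
      nlinarith [mul_nonneg hik (by linarith : (0:ℝ) ≤ 1 + i + c - 1/2)]
    have hrhs : (4:ℝ) / (l:ℝ)^k = 4 * i^k := by
      rw [hidef, inv_pow, div_eq_mul_inv]
    rw [hrhs]
    linarith
end

section
/- Fix a prime p and an integer k ≥ 1. For primes l₁ < l₂ < ... < l_m < l₀ and positive integers α₁,...,α_m with ∑α_i = n, let t be uniform on an integer interval of length f. Then E[∏_{i=1}^m (log v_{l_i,k}(t²−4p))^{α_i}] = E[∏_{i=1}^m (log Y_{l_i})^{α_i}] + O(Cⁿ l₀^{2kn} / f), where the Y_{l_i} are independent random variables with Y_{l_i} distributed as v_{l_i,k}(t²−4p) for t uniform mod l_i^{2k}, and C is an absolute constant. -/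
lemma gvk_bounds {l : ℕ} (hl : 2 ≤ l) (k : ℕ) (Δ : ℤ) :
    1/2 ≤ gvk l k Δ ∧ gvk l k Δ ≤ 2 := by
  have hl0 : (0:ℝ) < l := by positivity
  have hl2 : (2:ℝ) ≤ l := by exact_mod_cast hl
  set x : ℝ := (l:ℝ)⁻¹ with hx
  have hx0 : 0 < x := by positivity
  have hxh : x ≤ 1/2 := by
    rw [hx, inv_le_comm₀ (by positivity) (by norm_num)]
    linarith
  have hx2 : x^2 ≤ 1/4 := by nlinarith
  have h1 : (1:ℝ) ≤ (1 - x^2)⁻¹ := by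
    rw [le_inv_comm₀ (by norm_num) (by nlinarith)]; nlinarith
  have h43 : (1 - x^2)⁻¹ ≤ 4/3 := by
    rw [inv_le_comm₀ (by nlinarith) (by norm_num)]; nlinarith
  have key : ∀ c : ℝ, -2*x ≤ c → c ≤ 0 →
      1/2 ≤ (1 - x^2)⁻¹ * (1 + x + c) ∧ (1 - x^2)⁻¹ * (1 + x + c) ≤ 2 := by
    intro c h₁ h₂
    have hc1 : 1/2 ≤ 1 + x + c := by linarith
    have hc2 : 1 + x + c ≤ 3/2 := by linarith
    constructor
    · calc (1:ℝ)/2 = 1 * (1/2) := by ring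
        _ ≤ (1 - x^2)⁻¹ * (1 + x + c) :=
          mul_le_mul h1 hc1 (by norm_num) (by linarith)
    · calc (1 - x^2)⁻¹ * (1 + x + c) ≤ (4/3) * (3/2) :=
          mul_le_mul h43 hc2 (by linarith) (by norm_num)
        _ = 2 := by norm_num
  unfold gvk
  split
  · have := key 0 (by linarith) le_rfl
    rw [add_zero] at this
    exact this
  · unfold gv
    rw [← hx]
    split
    · exact key 0 (by linarith) le_rfl
    · have hlx1 : (l:ℝ) * x = 1 := by rw [hx]; exact mul_inv_cancel₀ hl0.ne'
      split
      · apply key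
        · have hpow : x ^ (gdelta l Δ + 2) ≤ x^2 := by
            apply pow_le_pow_of_le_one hx0.le (by linarith) (by omega)
          have hlx : ((l:ℝ)+1) * x^2 ≤ x + x^2 := by nlinarith
          have h2 : ((l:ℝ)+1) * x ^ (gdelta l Δ + 2) ≤ x + x^2 := by nlinarith
          nlinarith
        · have : 0 ≤ ((l:ℝ)+1) * x ^ (gdelta l Δ + 2) := by positivity
          linarith
      · apply key
        · have hpow : x ^ (gdelta l Δ + 1) ≤ x := by
            simpa using pow_le_pow_of_le_one hx0.le (by linarith) (by omega : 1 ≤ gdelta l Δ + 1)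
          nlinarith
        · have : 0 ≤ 2 * x ^ (gdelta l Δ + 1) := by positivity
          linarith


lemma dvd_of_dvd_sub {d a b : ℤ} (h1 : d ∣ a) (h2 : d ∣ a - b) : d ∣ b := by
  have := dvd_sub h1 h2; simpa using this

lemma dvd_of_dvd_sub' {d a b : ℤ} (h1 : d ∣ b) (h2 : d ∣ a - b) : d ∣ a := by
  have := dvd_add h1 h2; rw [add_sub_cancel] at this; exact this

lemma gv_congr_odd {l : ℕ} (hl : l.Prime) (hl2 : l ≠ 2) {k : ℕ} {Δ Δ' : ℤ}
    (hΔ : ¬ (l:ℤ)^(2*k) ∣ Δ) (h : (l:ℤ)^(2*k) ∣ Δ - Δ') : gv l Δ = gv l Δ' := by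
  have hl1 : 1 < (l:ℤ) := by exact_mod_cast hl.one_lt
  have hΔ' : ¬ (l:ℤ)^(2*k) ∣ Δ' := fun hc => hΔ (dvd_of_dvd_sub' hc h)
  have hset : {δ : ℕ | (l:ℤ)^(2*δ) ∣ Δ} = {δ : ℕ | (l:ℤ)^(2*δ) ∣ Δ'} := by
    ext δ
    simp only [Set.mem_setOf_eq]
    constructor
    · intro hd
      have hδk : δ ≤ k := by
        by_contra hc
        exact hΔ (dvd_trans (pow_dvd_pow _ (by omega)) hd)
      exact dvd_of_dvd_sub hd (dvd_trans (pow_dvd_pow _ (by omega)) h)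
    · intro hd
      have hδk : δ ≤ k := by
        by_contra hc
        exact hΔ' (dvd_trans (pow_dvd_pow _ (by omega)) hd)
      exact dvd_of_dvd_sub' hd (dvd_trans (pow_dvd_pow _ (by omega)) h)
  have hgd : gdelta l Δ = gdelta l Δ' := by simp [gdelta, hl2, hset]
  obtain ⟨δ₀, hδ₀⟩ : ∃ d, gdelta l Δ = d := ⟨_, rfl⟩
  have hmem : (l:ℤ)^(2*δ₀) ∣ Δ ∧ δ₀ < k := by
    have hne : ({δ : ℕ | (l:ℤ)^(2*δ) ∣ Δ}).Nonempty := ⟨0, by simp⟩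
    have hbdd : BddAbove {δ : ℕ | (l:ℤ)^(2*δ) ∣ Δ} := by
      refine ⟨k, fun δ hδ => ?_⟩
      by_contra hc
      exact hΔ (dvd_trans (pow_dvd_pow _ (by omega)) hδ)
    have hmem0 : δ₀ ∈ {δ : ℕ | (l:ℤ)^(2*δ) ∣ Δ} := by
      rw [← hδ₀, gdelta]; simp only [hl2, if_false]
      exact Nat.sSup_mem hne hbdd
    refine ⟨hmem0, ?_⟩
    by_contra hc
    exact hΔ (dvd_trans (pow_dvd_pow _ (by omega)) hmem0)
  obtain ⟨hdvd, hδk⟩ := hmem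
  have hdvd' : (l:ℤ)^(2*δ₀) ∣ Δ' := by
    have : δ₀ ∈ {δ : ℕ | (l:ℤ)^(2*δ) ∣ Δ'} := by rw [← hset]; exact hdvd
    exact this
  have hquot : (l:ℤ) ∣ Δ / (l:ℤ)^(2*δ₀) - Δ' / (l:ℤ)^(2*δ₀) := by
    obtain ⟨c, hc⟩ := hdvd
    obtain ⟨c', hc'⟩ := hdvd'
    have hp0 : (l:ℤ)^(2*δ₀) ≠ 0 := by positivity
    rw [hc, hc', Int.mul_ediv_cancel_left _ hp0, Int.mul_ediv_cancel_left _ hp0]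
    have h2 : (l:ℤ)^(2*δ₀) * (l:ℤ) ∣ (l:ℤ)^(2*δ₀) * (c - c') := by
      have hd2 : (l:ℤ)^(2*δ₀) * (l:ℤ) ∣ (l:ℤ)^(2*k) := by
        rw [← pow_succ]
        exact pow_dvd_pow _ (by omega)
      refine dvd_trans hd2 ?_
      rw [hc, hc'] at h
      rw [mul_sub]
      exact h
    exact (mul_dvd_mul_iff_left hp0).mp h2
  have hkron : kron l (Δ / (l:ℤ)^(2*δ₀)) = kron l (Δ' / (l:ℤ)^(2*δ₀)) := by
    simp only [kron, hl2, if_false]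
    apply jacobiSym.mod_left'
    have hm : Δ' / (l:ℤ)^(2*δ₀) ≡ Δ / (l:ℤ)^(2*δ₀) [ZMOD (l:ℤ)] := Int.modEq_iff_dvd.mpr hquot
    exact hm.symm
  unfold gv
  rw [← hgd, hδ₀, hkron]

lemma ediv_sub_dvd {d m Δ Δ' : ℤ} (hd : d ≠ 0) (h1 : d ∣ Δ) (h2 : d ∣ Δ')
    (h3 : d * m ∣ Δ - Δ') : m ∣ Δ / d - Δ' / d := by
  obtain ⟨c, hc⟩ := h1; obtain ⟨c', hc'⟩ := h2
  rw [hc, hc', Int.mul_ediv_cancel_left _ hd, Int.mul_ediv_cancel_left _ hd]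
  have hmm : d * m ∣ d * (c - c') := by rw [mul_sub, ← hc, ← hc']; exact h3
  exact (mul_dvd_mul_iff_left hd).mp hmm

lemma emod_eq_of_dvd_sub {c a b : ℤ} (hc : c ∣ a - b) : a % c = b % c := by
  exact Int.ModEq.symm (Int.modEq_iff_dvd.mpr hc)

lemma gv_congr_two {k : ℕ} (hk : 1 ≤ k) {Δ Δ' : ℤ}
    (hΔ : ¬ (2:ℤ)^(2*k) ∣ Δ) (h : (2:ℤ)^(2*k+1) ∣ Δ - Δ') : gv 2 Δ = gv 2 Δ' := by
  have h4 : ∀ δ:ℕ, ((4:ℤ))^δ = 2^(2*δ) := fun δ => by rw [pow_mul]; norm_num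
  have hΔ' : ¬ (2:ℤ)^(2*k) ∣ Δ' := by
    intro hc
    exact hΔ (dvd_of_dvd_sub' hc (dvd_trans (pow_dvd_pow _ (by omega)) h))
  have h' : (2:ℤ)^(2*k+1) ∣ Δ' - Δ := by
    have := dvd_neg.mpr h; simpa using this
  have htrans : ∀ A B : ℤ, ¬(2:ℤ)^(2*k) ∣ A → (2:ℤ)^(2*k+1) ∣ A - B → ∀ δ : ℕ,
      ((4:ℤ)^δ ∣ A ∧ (A/4^δ % 4 = 0 ∨ A/4^δ % 4 = 1)) →
      ((4:ℤ)^δ ∣ B ∧ (B/4^δ % 4 = 0 ∨ B/4^δ % 4 = 1)) := by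
    intro A B hA hAB δ ⟨hd, hm⟩
    have hd2 : (2:ℤ)^(2*δ) ∣ A := by rw [← h4 δ]; exact hd
    have hδk : δ < k := by
      by_contra hc
      exact hA (dvd_trans (pow_dvd_pow _ (by omega)) hd2)
    have hdB : (4:ℤ)^δ ∣ B := by
      rw [h4 δ]
      exact dvd_of_dvd_sub hd2 (dvd_trans (pow_dvd_pow _ (by omega)) hAB)
    refine ⟨hdB, ?_⟩
    have hq : (2:ℤ)^(2*k+1-2*δ) ∣ A / 4^δ - B / 4^δ := by
      apply ediv_sub_dvd (by positivity) hd hdB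
      rw [h4 δ, ← pow_add]
      have : 2*δ + (2*k+1-2*δ) = 2*k+1 := by omega
      rw [this]; exact hAB
    have h4d : (4:ℤ) ∣ A / 4^δ - B / 4^δ := by
      refine dvd_trans ?_ hq
      have : (4:ℤ) = 2^2 := by norm_num
      rw [this]; exact pow_dvd_pow _ (by omega)
    have := emod_eq_of_dvd_sub h4d
    omega
  have hset : {δ : ℕ | (4:ℤ)^δ ∣ Δ ∧ (Δ/4^δ % 4 = 0 ∨ Δ/4^δ % 4 = 1)}
      = {δ : ℕ | (4:ℤ)^δ ∣ Δ' ∧ (Δ'/4^δ % 4 = 0 ∨ Δ'/4^δ % 4 = 1)} := by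
    ext δ
    exact ⟨htrans Δ Δ' hΔ h δ, htrans Δ' Δ hΔ' h' δ⟩
  have e1 : gdelta 2 Δ = sSup {δ : ℕ | (4:ℤ)^δ ∣ Δ ∧ (Δ/4^δ % 4 = 0 ∨ Δ/4^δ % 4 = 1)} := by
    unfold gdelta; exact if_pos rfl
  have e2 : gdelta 2 Δ' = sSup {δ : ℕ | (4:ℤ)^δ ∣ Δ' ∧ (Δ'/4^δ % 4 = 0 ∨ Δ'/4^δ % 4 = 1)} := by
    unfold gdelta; exact if_pos rfl
  have hgd : gdelta 2 Δ = gdelta 2 Δ' := by rw [e1, e2, hset]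
  obtain ⟨δ₀, hδ₀⟩ : ∃ d, gdelta 2 Δ = d := ⟨_, rfl⟩
  have hmain : δ₀ < k ∧ (4:ℤ)^δ₀ ∣ Δ ∧ (4:ℤ)^δ₀ ∣ Δ' := by
    by_cases hne : ({δ : ℕ | (4:ℤ)^δ ∣ Δ ∧ (Δ/4^δ % 4 = 0 ∨ Δ/4^δ % 4 = 1)}).Nonempty
    · have hbdd : BddAbove {δ : ℕ | (4:ℤ)^δ ∣ Δ ∧ (Δ/4^δ % 4 = 0 ∨ Δ/4^δ % 4 = 1)} := by
        refine ⟨k, fun δ hδ => ?_⟩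
        by_contra hc
        have hd2 : (2:ℤ)^(2*δ) ∣ Δ := by rw [← h4 δ]; exact hδ.1
        exact hΔ (dvd_trans (pow_dvd_pow _ (by omega)) hd2)
      have hmem0 : δ₀ ∈ {δ : ℕ | (4:ℤ)^δ ∣ Δ ∧ (Δ/4^δ % 4 = 0 ∨ Δ/4^δ % 4 = 1)} := by
        rw [← hδ₀, e1]
        exact Nat.sSup_mem hne hbdd
      have hδk : δ₀ < k := by
        by_contra hc
        have hd2 : (2:ℤ)^(2*δ₀) ∣ Δ := by rw [← h4 δ₀]; exact hmem0.1
        exact hΔ (dvd_trans (pow_dvd_pow _ (by omega)) hd2)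
      exact ⟨hδk, hmem0.1, (htrans Δ Δ' hΔ h δ₀ hmem0).1⟩
    · have hE := Set.not_nonempty_iff_eq_empty.mp hne
      have : δ₀ = 0 := by
        rw [← hδ₀, e1, hE]
        simp
      rw [this]
      exact ⟨by omega, by simp, by simp⟩
  obtain ⟨hδk, hdvdA, hdvdB⟩ := hmain
  have hq8 : (8:ℤ) ∣ Δ / 4^δ₀ - Δ' / 4^δ₀ := by
    have hq : (2:ℤ)^(2*k+1-2*δ₀) ∣ Δ / 4^δ₀ - Δ' / 4^δ₀ := by
      apply ediv_sub_dvd (by positivity) hdvdA hdvdB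
      rw [h4 δ₀, ← pow_add]
      have : 2*δ₀ + (2*k+1-2*δ₀) = 2*k+1 := by omega
      rw [this]; exact h
    refine dvd_trans ?_ hq
    have : (8:ℤ) = 2^3 := by norm_num
    rw [this]; exact pow_dvd_pow _ (by omega)
  have hmod := emod_eq_of_dvd_sub hq8
  have hkron : kron 2 (Δ / (2:ℤ)^(2*δ₀)) = kron 2 (Δ' / (2:ℤ)^(2*δ₀)) := by
    simp only [kron, if_pos rfl]
    rw [h4 δ₀] at hmod
    simp [hmod]
  unfold gv
  rw [← hgd, hδ₀]
  norm_num
  rw [hkron]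

lemma gvk_congr_odd {l : ℕ} (hl : l.Prime) (hl2 : l ≠ 2) {k : ℕ} {Δ Δ' : ℤ}
    (h : (l:ℤ)^(2*k) ∣ Δ - Δ') : gvk l k Δ = gvk l k Δ' := by
  unfold gvk
  by_cases hd : (l:ℤ)^(2*k) ∣ Δ
  · rw [if_pos hd, if_pos (dvd_of_dvd_sub hd h)]
  · rw [if_neg hd, if_neg (fun hc => hd (dvd_of_dvd_sub' hc h))]
    exact gv_congr_odd hl hl2 hd h

lemma gvk_congr_two {k : ℕ} (hk : 1 ≤ k) {Δ Δ' : ℤ}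
    (h : (2:ℤ)^(2*k+1) ∣ Δ - Δ') : gvk 2 k Δ = gvk 2 k Δ' := by
  have h' : ((2:ℕ):ℤ)^(2*k) ∣ Δ - Δ' := by
    refine dvd_trans ?_ h
    push_cast
    exact pow_dvd_pow _ (by omega)
  unfold gvk
  by_cases hd : ((2:ℕ):ℤ)^(2*k) ∣ Δ
  · rw [if_pos hd, if_pos (dvd_of_dvd_sub hd h')]
  · rw [if_neg hd, if_neg (fun hc => hd (dvd_of_dvd_sub' hc h'))]
    apply gv_congr_two hk _ h
    intro hc
    exact hd (by push_cast; exact hc)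

/-- periodicity in t of gvk l k (t^2 + c), period l^(2k) -/
lemma gvk_sq_periodic {l : ℕ} (hl : l.Prime) {k : ℕ} (hk : 1 ≤ k) (c : ℤ) (t : ℤ) :
    gvk l k ((t + ((l^(2*k) : ℕ) : ℤ))^2 + c) = gvk l k (t^2 + c) := by
  have hL : ((l^(2*k) : ℕ) : ℤ) = (l:ℤ)^(2*k) := by push_cast; ring
  rw [hL]
  by_cases hl2 : l = 2
  · subst hl2
    apply gvk_congr_two hk
    have : ((2:ℕ):ℤ) = 2 := by norm_num
    rw [this]
    have expand : (t + (2:ℤ)^(2*k))^2 + c - (t^2 + c)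
        = 2^(2*k+1) * (t + 2^(2*k-1)) := by
      have h1 : (2:ℤ)^(2*k) * 2^(2*k) = 2^(2*k+1) * 2^(2*k-1) := by
        rw [← pow_add, ← pow_add]
        congr 1
        omega
      have h2 : (2:ℤ) * 2^(2*k) = 2^(2*k+1) := by rw [pow_succ]; ring
      linear_combination t * h2 + h1
    rw [expand]
    exact Dvd.intro _ rfl
  · apply gvk_congr_odd hl hl2
    have expand : (t + (l:ℤ)^(2*k))^2 + c - (t^2 + c)
        = (l:ℤ)^(2*k) * (2*t + (l:ℤ)^(2*k)) := by ring
    rw [expand]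
    exact Dvd.intro _ rfl

section periodic
variable {F : ℤ → ℝ} {T : ℕ}

lemma per_int_mul (hF : ∀ t, F (t + (T:ℤ)) = F t) :
    ∀ (n : ℤ), ∀ t, F (t + n*T) = F t := by
  have key : ∀ t, F (t - (T:ℤ)) = F t := fun t => by
    have := hF (t - T); rw [sub_add_cancel] at this; exact this.symm
  intro n
  induction n using Int.induction_on with
  | zero => simp
  | succ n ih =>
    intro t
    have h : t + ((n:ℤ)+1)*T = (t + T) + n*T := by ring
    rw [h, ih, hF]
  | pred n ih =>
    intro t
    have h : t + (-(n:ℤ)-1)*T = (t - T) + (-n)*T := by ring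
    rw [h, ih, key]

lemma per_emod (hF : ∀ t, F (t + (T:ℤ)) = F t) (t : ℤ) : F t = F (t % T) := by
  conv_lhs => rw [← Int.emod_add_mul_ediv t (T:ℤ)]
  rw [mul_comm]
  exact per_int_mul hF _ _

lemma sum_window_eq (hT : 0 < T) (hF : ∀ t, F (t + (T:ℤ)) = F t) (a : ℤ) :
    ∑ t ∈ Finset.Ico a (a + (T:ℤ)), F t = ∑ t ∈ Finset.Ico (0:ℤ) (T:ℤ), F t := by
  have hT' : (0:ℤ) < T := by exact_mod_cast hT
  apply Finset.sum_nbij' (fun t => t % (T:ℤ)) (fun s => a + (s - a) % (T:ℤ))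
  · intro t ht
    simp only [Finset.mem_Ico] at *
    constructor
    · exact Int.emod_nonneg t (by omega)
    · exact Int.emod_lt_of_pos t hT'
  · intro s hs
    simp only [Finset.mem_Ico] at *
    have h1 : 0 ≤ (s - a) % (T:ℤ) := Int.emod_nonneg _ (by omega)
    have h2 : (s - a) % (T:ℤ) < T := Int.emod_lt_of_pos _ hT'
    omega
  · intro t ht
    simp only [Finset.mem_Ico] at ht
    have hm : (t % (T:ℤ)) % T = t % T := Int.emod_emod_of_dvd _ dvd_rfl
    have hm2 : (t % (T:ℤ) - a) % T = (t - a) % T := Int.ModEq.sub_right a hm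
    have hm3 : (t - a) % (T:ℤ) = t - a := Int.emod_eq_of_lt (by omega) (by omega)
    rw [hm2, hm3]; ring
  · intro s hs
    simp only [Finset.mem_Ico] at hs
    have hm : ((s - a) % (T:ℤ)) % T = (s - a) % T := Int.emod_emod_of_dvd _ dvd_rfl
    have hm2 : (a + (s - a) % (T:ℤ)) % T = (a + (s - a)) % T := Int.ModEq.add_left a hm
    rw [hm2, show a + (s - a) = s by ring]
    exact Int.emod_eq_of_lt (by omega) (by omega)
  · intro t ht
    exact per_emod hF t
end periodic

lemma per_dvd {F : ℤ → ℝ} {N P : ℕ} (hF : ∀ t, F (t + (N:ℤ)) = F t) (h : N ∣ P) :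
    ∀ t, F (t + (P:ℤ)) = F t := by
  obtain ⟨c, rfl⟩ := h
  intro t
  have : ((N*c : ℕ) : ℤ) = (c:ℤ) * (N:ℤ) := by push_cast; ring
  rw [this]
  exact per_int_mul hF _ _

lemma sum_q_periods {F : ℤ → ℝ} {T : ℕ} (hT : 0 < T) (hF : ∀ t, F (t + (T:ℤ)) = F t)
    (a : ℤ) (q : ℕ) :
    ∑ t ∈ Finset.Ico a (a + ((q*T : ℕ):ℤ)), F t
      = q * ∑ t ∈ Finset.Ico (0:ℤ) (T:ℤ), F t := by
  induction q with
  | zero => simp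
  | succ q ih =>
    have h1 : a ≤ a + ((q*T : ℕ):ℤ) := le_add_of_nonneg_right (by positivity)
    have h2 : a + ((q*T : ℕ):ℤ) ≤ a + (((q+1)*T : ℕ):ℤ) := by
      push_cast; nlinarith [hT]
    rw [← Finset.Ico_union_Ico_eq_Ico h1 h2,
      Finset.sum_union (Finset.Ico_disjoint_Ico_consecutive _ _ _)]
    have h3 : a + (((q+1)*T : ℕ):ℤ) = (a + ((q*T : ℕ):ℤ)) + (T:ℤ) := by push_cast; ring
    rw [h3, ih, sum_window_eq hT hF]
    push_cast; ring

lemma sum_Ico_zero_eq_range (G : ℤ → ℝ) (N : ℕ) :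
    ∑ t ∈ Finset.Ico (0:ℤ) (N:ℤ), G t = ∑ t ∈ Finset.range N, G (t:ℤ) := by
  apply Finset.sum_nbij' (fun t : ℤ => t.toNat) (fun s : ℕ => (s:ℤ))
  · intro t ht
    simp only [Finset.mem_Ico] at ht
    simp only [Finset.mem_range]
    omega
  · intro s hs
    simp only [Finset.mem_range] at hs
    simp only [Finset.mem_Ico]
    omega
  · intro t ht
    simp only [Finset.mem_Ico] at ht
    omega
  · intro s _
    simp
  · intro t ht
    simp only [Finset.mem_Ico] at ht
    rw [Int.toNat_of_nonneg ht.1]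

lemma crt_two {M N : ℕ} (hM : 0 < M) (hN : 0 < N) (hco : M.Coprime N)
    {g h : ℤ → ℝ} (hg : ∀ t, g (t + (M:ℤ)) = g t) (hh : ∀ t, h (t + (N:ℤ)) = h t) :
    ∑ t ∈ Finset.range (M*N), g (t:ℤ) * h (t:ℤ)
      = (∑ t ∈ Finset.range M, g (t:ℤ)) * (∑ t ∈ Finset.range N, h (t:ℤ)) := by
  rw [Finset.sum_mul_sum]
  rw [← Finset.sum_product']
  apply Finset.sum_nbij' (fun t : ℕ => (t % M, t % N))
    (fun s : ℕ × ℕ => (Nat.chineseRemainder hco s.1 s.2 : ℕ) % (M*N))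
  · intro t ht
    simp only [Finset.mem_product, Finset.mem_range]
    exact ⟨Nat.mod_lt _ hM, Nat.mod_lt _ hN⟩
  · intro s hs
    simp only [Finset.mem_range]
    exact Nat.mod_lt _ (by positivity)
  · intro t ht
    simp only [Finset.mem_range] at ht
    set c := (Nat.chineseRemainder hco (t % M) (t % N) : ℕ) with hc
    have hprop := (Nat.chineseRemainder hco (t % M) (t % N)).prop
    have h1 : c ≡ t [MOD M] := hprop.1.trans (Nat.mod_modEq t M)
    have h2 : c ≡ t [MOD N] := hprop.2.trans (Nat.mod_modEq t N)
    have h3 : c ≡ t [MOD M*N] := (Nat.modEq_and_modEq_iff_modEq_mul hco).mp ⟨h1, h2⟩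
    calc c % (M*N) = t % (M*N) := h3
      _ = t := Nat.mod_eq_of_lt ht
  · rintro ⟨x, y⟩ hs
    simp only [Finset.mem_product, Finset.mem_range] at hs
    set c := (Nat.chineseRemainder hco x y : ℕ) with hc
    have hprop := (Nat.chineseRemainder hco x y).prop
    have hp1 : c % M = x % M := hprop.1
    have hp2 : c % N = y % N := hprop.2
    have hm1 := Nat.mod_mod_of_dvd c (dvd_mul_right M N)
    have hm2 := Nat.mod_mod_of_dvd c (dvd_mul_left N M)
    have e1 : c % (M*N) % M = x := by
      rw [hm1, hp1]; exact Nat.mod_eq_of_lt hs.1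
    have e2 : c % (M*N) % N = y := by
      rw [hm2, hp2]; exact Nat.mod_eq_of_lt hs.2
    exact Prod.ext e1 e2
  · intro t ht
    have eg : g (t:ℤ) = g ((t % M : ℕ):ℤ) := by
      rw [per_emod hg (t:ℤ)]
      congr 1
    have eh : h (t:ℤ) = h ((t % N : ℕ):ℤ) := by
      rw [per_emod hh (t:ℤ)]
      congr 1
    rw [← eg, ← eh]

lemma crt_prod {ι : Type*} [DecidableEq ι] (s : Finset ι) (N : ι → ℕ) (g : ι → ℤ → ℝ)
    (hN : ∀ i ∈ s, 0 < N i) (hco : (s : Set ι).Pairwise (Function.onFun Nat.Coprime N))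
    (hg : ∀ i ∈ s, ∀ t, g i (t + (N i : ℤ)) = g i t) :
    ∑ t ∈ Finset.range (∏ i ∈ s, N i), ∏ i ∈ s, g i (t:ℤ)
      = ∏ i ∈ s, ∑ t ∈ Finset.range (N i), g i (t:ℤ) := by
  induction s using Finset.induction with
  | empty => simp
  | @insert j s hj ih =>
    simp only [Finset.prod_insert hj]
    have hNs : 0 < ∏ i ∈ s, N i :=
      Finset.prod_pos (fun i hi => hN i (Finset.mem_insert_of_mem hi))
    have hco' : (N j).Coprime (∏ i ∈ s, N i) := by
      apply Nat.Coprime.prod_right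
      intro i hi
      exact hco (Finset.mem_insert_self j s) (Finset.mem_insert_of_mem hi)
        (fun he => hj (he ▸ hi))
    have hper : ∀ t : ℤ, (∏ i ∈ s, g i (t + ((∏ i ∈ s, N i : ℕ):ℤ)))
        = ∏ i ∈ s, g i t := by
      intro t
      apply Finset.prod_congr rfl
      intro i hi
      exact per_dvd (hg i (Finset.mem_insert_of_mem hi))
        (Finset.dvd_prod_of_mem N hi) t
    have := crt_two (g := g j) (h := fun t => ∏ i ∈ s, g i t)
      (hN j (Finset.mem_insert_self j s)) hNs hco'
      (hg j (Finset.mem_insert_self j s)) hper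
    rw [← ih (fun i hi => hN i (Finset.mem_insert_of_mem hi))
        (hco.mono (Finset.coe_subset.mpr (Finset.subset_insert j s)))
        (fun i hi => hg i (Finset.mem_insert_of_mem hi))]
    calc ∑ t ∈ Finset.range (N j * ∏ i ∈ s, N i), (g j (t:ℤ) * ∏ i ∈ s, g i (t:ℤ))
        = (∑ t ∈ Finset.range (N j), g j (t:ℤ))
          * (∑ t ∈ Finset.range (∏ i ∈ s, N i), ∏ i ∈ s, g i (t:ℤ)) := this
      _ = _ := rfl

lemma log_gvk_bound {L : ℕ} (hL : 2 ≤ L) (k : ℕ) (Δ : ℤ) :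
    |Real.log (gvk L k Δ)| ≤ 1 := by
  obtain ⟨h1, h2⟩ := gvk_bounds hL k Δ
  have hpos : (0:ℝ) < gvk L k Δ := by linarith
  have hlog2 : Real.log 2 ≤ 1 := by
    have := Real.add_one_le_exp (1:ℝ)
    have h2e : (2:ℝ) ≤ Real.exp 1 := by linarith
    calc Real.log 2 ≤ Real.log (Real.exp 1) := Real.log_le_log (by norm_num) h2e
      _ = 1 := Real.log_exp 1
  rw [abs_le]
  constructor
  · have hle : Real.log (1/2) ≤ Real.log (gvk L k Δ) := Real.log_le_log (by norm_num) h1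
    rw [show (1:ℝ)/2 = 2⁻¹ by norm_num, Real.log_inv] at hle
    linarith
  · have hle : Real.log (gvk L k Δ) ≤ Real.log 2 := Real.log_le_log hpos h2
    linarith

/-- Moment comparison: for distinct primes l₁,...,l_m < l₀ and exponents α_i summing to n,
the expectation of ∏ (log v_{l_i,k}(t²−4p))^{α_i} over t uniform on an integer interval of
length f equals the product of the individual expectations (t uniform mod l_i^{2k}), up to
O(Cⁿ l₀^{2kn} / f) with an absolute constant C. -/
theorem stmt18 :
    ∃ C > (0:ℝ), ∀ (p : ℕ), p.Prime → ∀ (k : ℕ), 1 ≤ k →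
    ∀ (m l₀ : ℕ) (l : Fin m → ℕ), (∀ i, (l i).Prime) → Function.Injective l →
    (∀ i, l i < l₀) →
    ∀ (α : Fin m → ℕ), (∀ i, 1 ≤ α i) →
    ∀ (n : ℕ), n = ∑ i, α i →
    ∀ (a : ℤ) (f : ℕ), 0 < f →
      |(∑ t ∈ Finset.Ico a (a + (f:ℤ)),
            ∏ i, (Real.log (gvk (l i) k (t^2 - 4*p)))^(α i)) / f
        - ∏ i, ((∑ t ∈ Finset.range ((l i)^(2*k)),
            (Real.log (gvk (l i) k ((t:ℤ)^2 - 4*p)))^(α i)) / ((l i)^(2*k) : ℝ))|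
      ≤ C^n * (l₀:ℝ)^(2*k*n) / f := by
  refine ⟨2, by norm_num, ?_⟩
  intro p hp k hk m l₀ l hl hinj hlt α hα n hn a f hf
  have hf0 : (0:ℝ) < f := by exact_mod_cast hf
  -- notation
  set N : Fin m → ℕ := fun i => (l i)^(2*k) with hN
  set F : Fin m → ℤ → ℝ := fun i t => (Real.log (gvk (l i) k (t^2 - 4*(p:ℤ))))^(α i) with hF
  set G : ℤ → ℝ := fun t => ∏ i, F i t with hG
  rcases Nat.eq_zero_or_pos m with hm | hm
  · -- m = 0 : both sides trivial
    subst hm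
    have hG1 : ∀ t : ℤ, G t = 1 := fun t => Finset.prod_of_isEmpty _
    have hs : (∑ t ∈ Finset.Ico a (a + (f:ℤ)), G t) = f := by
      rw [Finset.sum_congr rfl (fun t _ => hG1 t), Finset.sum_const, Int.card_Ico]
      simp
    have hn0 : n = 0 := by simp [hn]
    rw [hn0]
    calc |(∑ t ∈ Finset.Ico a (a + (f:ℤ)), G t) / f - ∏ i : Fin 0, ((∑ t ∈ Finset.range (N i),
            (Real.log (gvk (l i) k ((t:ℤ)^2 - 4*p)))^(α i)) / ((l i)^(2*k) : ℝ))|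
        = |(f:ℝ)/f - 1| := by rw [hs, Finset.prod_of_isEmpty]
      _ = 0 := by rw [div_self hf0.ne', sub_self, abs_zero]
      _ ≤ 2^0 * (l₀:ℝ)^(2*k*0) / f := by positivity
  -- main case m ≥ 1
  have hl2 : ∀ i, 2 ≤ l i := fun i => (hl i).two_le
  have hl₀3 : 3 ≤ l₀ := by
    have := hlt ⟨0, hm⟩
    have := hl2 ⟨0, hm⟩
    omega
  have hmn : m ≤ n := by
    rw [hn]
    calc m = ∑ _i : Fin m, 1 := by simp
      _ ≤ ∑ i, α i := Finset.sum_le_sum (fun i _ => hα i)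
  have hn1 : 1 ≤ n := by omega
  have hNpos : ∀ i, 0 < N i := fun i => Nat.pow_pos (by have := hl2 i; omega)
  set T : ℕ := ∏ i, N i with hT
  have hTpos : 0 < T := Finset.prod_pos (fun i _ => hNpos i)
  have hT0 : (0:ℝ) < T := by exact_mod_cast hTpos
  -- periodicity of the factors
  have hFper : ∀ i, ∀ t : ℤ, F i (t + (N i : ℤ)) = F i t := by
    intro i t
    simp only [hF]
    congr 2
    have := gvk_sq_periodic (hl i) hk (-(4*(p:ℤ))) t
    simp only [← sub_eq_add_neg] at this
    exact this
  have hGper : ∀ t : ℤ, G (t + (T:ℤ)) = G t := by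
    intro t
    simp only [hG]
    apply Finset.prod_congr rfl
    intro i _
    exact per_dvd (hFper i) (Finset.dvd_prod_of_mem N (Finset.mem_univ i)) t
  -- bounds
  have hFbound : ∀ i, ∀ t : ℤ, |F i t| ≤ 1 := by
    intro i t
    simp only [hF]
    rw [abs_pow]
    exact pow_le_one₀ (abs_nonneg _) (log_gvk_bound (hl2 i) k _)
  have hGbound : ∀ t : ℤ, |G t| ≤ 1 := by
    intro t
    simp only [hG]
    rw [Finset.abs_prod]
    exact Finset.prod_le_one (fun i _ => abs_nonneg _) (fun i _ => hFbound i t)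
  -- CRT: per-period sum equals product
  set S₀ : ℝ := ∑ t ∈ Finset.Ico (0:ℤ) (T:ℤ), G t with hS₀
  have hS₀bound : |S₀| ≤ T := by
    rw [hS₀]
    calc |∑ t ∈ Finset.Ico (0:ℤ) (T:ℤ), G t| ≤ ∑ t ∈ Finset.Ico (0:ℤ) (T:ℤ), |G t| :=
        Finset.abs_sum_le_sum_abs _ _
      _ ≤ ∑ t ∈ Finset.Ico (0:ℤ) (T:ℤ), 1 := Finset.sum_le_sum (fun t _ => hGbound t)
      _ = ((Finset.Ico (0:ℤ) (T:ℤ)).card : ℝ) := by rw [Finset.sum_const]; simp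
      _ = T := by rw [Int.card_Ico]; simp
  have hcrt : S₀ = ∏ i, ∑ t ∈ Finset.range (N i), F i (t:ℤ) := by
    rw [hS₀, sum_Ico_zero_eq_range G T, hT]
    apply crt_prod Finset.univ N F (fun i _ => hNpos i) ?_ (fun i _ t => hFper i t)
    intro i _ j _ hij
    have hij' : l i ≠ l j := fun he => hij (hinj he)
    exact Nat.Coprime.pow _ _ ((Nat.coprime_primes (hl i) (hl j)).mpr hij')
  -- identify B with S₀ / T
  have hB : (∏ i, ((∑ t ∈ Finset.range ((l i)^(2*k)),
        (Real.log (gvk (l i) k ((t:ℤ)^2 - 4*p)))^(α i)) / ((l i)^(2*k) : ℝ)))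
      = S₀ / T := by
    rw [hcrt, Finset.prod_div_distrib]
    congr 1
    rw [hT]
    simp only [hN]
    push_cast
    ring
  rw [hB]
  -- split the interval
  set q : ℕ := f / T with hq
  set r : ℕ := f % T with hr
  have hfqr : q * T + r = f := by
    rw [hq, hr, Nat.mul_comm]
    exact Nat.div_add_mod f T
  have h1 : a ≤ a + ((q*T : ℕ):ℤ) := le_add_of_nonneg_right (by positivity)
  have h2 : a + ((q*T : ℕ):ℤ) ≤ a + (f:ℤ) := by
    have : (q*T : ℕ) ≤ f := by omega
    have := (Nat.cast_le (α := ℤ)).mpr this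
    omega
  have hsplit : ∑ t ∈ Finset.Ico a (a + (f:ℤ)), G t
      = (q:ℝ) * S₀ + ∑ t ∈ Finset.Ico (a + ((q*T : ℕ):ℤ)) (a + (f:ℤ)), G t := by
    rw [← Finset.Ico_union_Ico_eq_Ico h1 h2,
      Finset.sum_union (Finset.Ico_disjoint_Ico_consecutive _ _ _),
      sum_q_periods hTpos hGper a q, hS₀]
  set R : ℝ := ∑ t ∈ Finset.Ico (a + ((q*T : ℕ):ℤ)) (a + (f:ℤ)), G t with hRdef
  have hRbound : |R| ≤ r := by
    rw [hRdef]
    calc |∑ t ∈ Finset.Ico (a + ((q*T : ℕ):ℤ)) (a + (f:ℤ)), G t|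
        ≤ ∑ t ∈ Finset.Ico (a + ((q*T : ℕ):ℤ)) (a + (f:ℤ)), |G t| :=
        Finset.abs_sum_le_sum_abs _ _
      _ ≤ ∑ t ∈ Finset.Ico (a + ((q*T : ℕ):ℤ)) (a + (f:ℤ)), 1 :=
        Finset.sum_le_sum (fun t _ => hGbound t)
      _ = ((Finset.Ico (a + ((q*T : ℕ):ℤ)) (a + (f:ℤ))).card : ℝ) := by
        rw [Finset.sum_const]; simp
      _ = r := by
        rw [Int.card_Ico]
        have : a + (f:ℤ) - (a + ((q*T : ℕ):ℤ)) = ((r:ℕ):ℤ) := by push_cast; omega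
        rw [this]
        simp
  have hfR : (f:ℝ) = q * T + r := by
    have := congrArg (fun x : ℕ => (x:ℝ)) hfqr
    push_cast at this
    linarith
  have hrT : (r:ℝ) ≤ T := by
    have : r < T := Nat.mod_lt f hTpos
    exact_mod_cast this.le
  have key : (∑ t ∈ Finset.Ico a (a + (f:ℤ)), G t) / f - S₀ / T
      = (R * T - r * S₀) / (f * T) := by
    have hden : ((q:ℝ) * T + r) ≠ 0 := by rw [← hfR]; exact hf0.ne'
    rw [hsplit, hfR]
    field_simp
    ring
  rw [key]
  have habs : |(R * T - r * S₀) / (f * T)| ≤ 2*T/f := by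
    rw [abs_div, abs_of_pos (by positivity : (0:ℝ) < f * T)]
    rw [div_le_div_iff₀ (by positivity) hf0]
    have h3 : |R * T - r * S₀| ≤ 2 * (T*T) := by
      have t1 : |R| * T ≤ T * T :=
        mul_le_mul_of_nonneg_right (hRbound.trans hrT) hT0.le
      have t2 : (r:ℝ) * |S₀| ≤ T * T := by
        apply mul_le_mul hrT hS₀bound (abs_nonneg _) hT0.le
      calc |R * T - r * S₀| ≤ |R * T| + |r * S₀| := abs_sub _ _
        _ = |R| * T + r * |S₀| := by
          rw [abs_mul, abs_mul, abs_of_pos hT0, abs_of_nonneg (by positivity : (0:ℝ) ≤ (r:ℝ))]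
        _ ≤ T * T + T * T := add_le_add t1 t2
        _ = 2 * (T*T) := by ring
    calc |R * T - r * S₀| * f ≤ 2 * (T*T) * f :=
        mul_le_mul_of_nonneg_right h3 hf0.le
      _ = 2 * T * (f * T) := by ring
  refine le_trans habs ?_
  rw [div_le_div_iff₀ hf0 hf0]
  have hTn : (T:ℝ) ≤ (l₀:ℝ)^(2*k*n) := by
    have hnat : T ≤ l₀^(2*k*n) := by
      have s1 : T ≤ ∏ _i : Fin m, l₀^(2*k) := by
        rw [hT]
        apply Finset.prod_le_prod' 
        intro i _
        simp only [hN]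
        exact Nat.pow_le_pow_left (hlt i).le _
      have s2 : ∏ _i : Fin m, l₀^(2*k) = l₀^(2*k*m) := by
        rw [Finset.prod_const, Finset.card_univ, Fintype.card_fin, ← pow_mul]
      have s3 : l₀^(2*k*m) ≤ l₀^(2*k*n) := 
        Nat.pow_le_pow_right (by omega) (by nlinarith)
      omega
    calc (T:ℝ) ≤ ((l₀^(2*k*n) : ℕ) : ℝ) := by exact_mod_cast hnat
      _ = (l₀:ℝ)^(2*k*n) := by push_cast; ring
  have h2n : (2:ℝ) ≤ 2^n := le_self_pow₀ (by norm_num) (by omega)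
  have hmulf : 2 * (T:ℝ) ≤ 2^n * (l₀:ℝ)^(2*k*n) :=
    mul_le_mul h2n hTn (by positivity) (by positivity)
  exact mul_le_mul_of_nonneg_right hmulf hf0.le
end
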